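/- The map μ₅ : ℍ × ℍ → 𝔖₂ sending (z₁,z₂) to (1/(2√5))·[[(1+√5)z₁ - (1-√5)z₂, 2(z₁-z₂)], [2(z₁-z₂), (-1+√5)z₁ + (1+√5)z₂]] takes values in the surface N₅ = {[[τ₁,τ₂],[τ₂,τ₃]] ∈ 𝔖₂ : -τ₁ + τ₂ + τ₃ = 0}, and conversely every point of N₅ is in the image of μ₅. -/

import Mathlib

noncomputable section

/-- The map `μ₅ : ℍ × ℍ → 𝔖₂` of the paper. -/
def mu5 (z₁ z₂ : ℂ) : Matrix (Fin 2) (Fin 2) ℂ :=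
  (1 / (2 * (Real.sqrt 5 : ℂ))) •
    !![(1 + (Real.sqrt 5 : ℂ)) * z₁ - (1 - (Real.sqrt 5 : ℂ)) * z₂, 2 * (z₁ - z₂);
       2 * (z₁ - z₂), (-1 + (Real.sqrt 5 : ℂ)) * z₁ + (1 + (Real.sqrt 5 : ℂ)) * z₂]

/-- Membership in the Siegel upper half space of degree 2: symmetric with
positive definite imaginary part. -/
def InSiegel (Ω : Matrix (Fin 2) (Fin 2) ℂ) : Prop :=
  Ω.IsSymm ∧ (Matrix.of fun i j => (Ω i j).im).PosDef

lemma posdef_of_fin_two (M : Matrix (Fin 2) (Fin 2) ℝ) (hsym : M.IsSymm)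
    (h00 : 0 < M 0 0) (hdet : 0 < M 0 0 * M 1 1 - M 0 1 * M 0 1) : M.PosDef := by
  have h10 : M 1 0 = M 0 1 := by
    have := congrFun (congrFun hsym 0) 1
    simpa [Matrix.transpose_apply] using this
  rw [Matrix.posDef_iff_dotProduct_mulVec]
  constructor
  · ext i j
    fin_cases i <;> fin_cases j <;>
      simp [Matrix.conjTranspose_apply, h10]
  · intro x hx
    have hx' : x 0 ≠ 0 ∨ x 1 ≠ 0 := by
      by_contra h
      push_neg at h
      apply hx
      ext i; fin_cases i <;> simp [h.1, h.2]
    have : dotProduct (star x) (M.mulVec x) =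
        M 0 0 * (x 0)^2 + 2 * (M 0 1) * (x 0 * x 1) + M 1 1 * (x 1)^2 := by
      simp [dotProduct, Matrix.mulVec, Fin.sum_univ_two, h10]
      ring
    rw [this]
    rcases hx' with h | h
    · rcases eq_or_ne (x 1) 0 with h1 | h1
      · have := sq_pos_of_ne_zero h
        simp only [h1]
        nlinarith [mul_pos h00 this]
      · nlinarith [sq_nonneg (M 0 0 * x 0 + M 0 1 * x 1), sq_pos_of_ne_zero h1]
    · nlinarith [sq_nonneg (M 0 0 * x 0 + M 0 1 * x 1), sq_pos_of_ne_zero h]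

/-- The map `μ₅` takes values in the surface
`N₅ = {[[τ₁,τ₂],[τ₂,τ₃]] ∈ 𝔖₂ : -τ₁ + τ₂ + τ₃ = 0}`, and every point of `N₅`
is in the image of `μ₅`. -/
theorem mu5_image_eq_N5 :
    (∀ z₁ z₂ : ℂ, 0 < z₁.im → 0 < z₂.im →
      InSiegel (mu5 z₁ z₂) ∧
        -(mu5 z₁ z₂ 0 0) + mu5 z₁ z₂ 0 1 + mu5 z₁ z₂ 1 1 = 0) ∧
    (∀ Ω : Matrix (Fin 2) (Fin 2) ℂ, InSiegel Ω →
      -(Ω 0 0) + Ω 0 1 + Ω 1 1 = 0 →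
      ∃ z₁ z₂ : ℂ, 0 < z₁.im ∧ 0 < z₂.im ∧ mu5 z₁ z₂ = Ω) := by
  have hs0 : (0:ℝ) < Real.sqrt 5 := Real.sqrt_pos.mpr (by norm_num)
  have hs2 : Real.sqrt 5 ^ 2 = 5 := Real.sq_sqrt (by norm_num)
  have hsC : (Real.sqrt 5 : ℂ) ≠ 0 := Complex.ofReal_ne_zero.mpr (ne_of_gt hs0)
  have h5 : Real.sqrt 5 * Real.sqrt 5 = 5 := Real.mul_self_sqrt (by norm_num)
  have h5C : (Real.sqrt 5 : ℂ) * (Real.sqrt 5 : ℂ) = 5 := by exact_mod_cast h5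
  constructor
  · intro z₁ z₂ h₁ h₂
    set s := Real.sqrt 5 with hsdef
    refine ⟨⟨?_, ?_⟩, ?_⟩
    · ext i j
      fin_cases i <;> fin_cases j <;> simp [mu5]
    · apply posdef_of_fin_two
      · ext i j
        fin_cases i <;> fin_cases j <;> simp [mu5]
      · show 0 < (mu5 z₁ z₂ 0 0).im
        simp [mu5, Complex.div_im, Complex.mul_im]
        nlinarith [hs0, hs2]
      · show 0 < (mu5 z₁ z₂ 0 0).im * (mu5 z₁ z₂ 1 1).im -
          (mu5 z₁ z₂ 0 1).im * (mu5 z₁ z₂ 0 1).im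
        have e1 : (mu5 z₁ z₂ 0 0).im = ((1+s)*z₁.im - (1-s)*z₂.im) / (2*s) := by
          simp [mu5, Complex.div_im, Complex.mul_im]
          field_simp
          linear_combination (((1+s)*z₁.im - (1-s)*z₂.im)) * h5
        have e2 : (mu5 z₁ z₂ 1 1).im = ((-1+s)*z₁.im + (1+s)*z₂.im) / (2*s) := by
          simp [mu5, Complex.div_im, Complex.mul_im]
          field_simp
          linear_combination (((-1+s)*z₁.im + (1+s)*z₂.im)) * h5
        have e3 : (mu5 z₁ z₂ 0 1).im = (z₁.im - z₂.im) / s := by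
          simp [mu5, Complex.div_im, Complex.mul_im]
          field_simp
          linear_combination ((z₁.im - z₂.im)) * h5
        rw [e1, e2, e3]
        have key : ((1+s)*z₁.im - (1-s)*z₂.im) / (2*s) * (((-1+s)*z₁.im + (1+s)*z₂.im) / (2*s)) -
            (z₁.im - z₂.im) / s * ((z₁.im - z₂.im) / s) = z₁.im * z₂.im := by
          field_simp
          linear_combination ((z₁.im - z₂.im)^2) * h5
        rw [key]
        exact mul_pos h₁ h₂
    · simp [mu5]
      field_simp
      ring
  · intro Ω hΩ hrel
    obtain ⟨hsym, hpos⟩ := hΩ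
    set s := Real.sqrt 5 with hsdef
    have h10 : Ω 1 0 = Ω 0 1 := by
      have := congrFun (congrFun hsym.eq 0) 1
      simpa [Matrix.transpose_apply] using this
    set Y : Matrix (Fin 2) (Fin 2) ℝ := Matrix.of fun i j => (Ω i j).im with hY
    have hY00 : 0 < Y 0 0 := by
      have := hpos.dotProduct_mulVec_pos (x := ![1, 0]) (by
        intro h
        have := congrFun h 0
        simp at this)
      simpa [dotProduct, Matrix.mulVec, Fin.sum_univ_two, hY] using this
    have hY11 : 0 < Y 1 1 := by
      have := hpos.dotProduct_mulVec_pos (x := ![0, 1]) (by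
        intro h
        have := congrFun h 1
        simp at this)
      simpa [dotProduct, Matrix.mulVec, Fin.sum_univ_two, hY] using this
    have hdet : 0 < Y 0 0 * Y 1 1 - Y 0 1 * Y 0 1 := by
      have := hpos.det_pos
      have hY10 : Y 1 0 = Y 0 1 := by simp [hY, h10]
      rw [Matrix.det_fin_two, hY10] at this
      linarith
    have hrelim : Y 0 0 = Y 0 1 + Y 1 1 := by
      have := congrArg Complex.im hrel
      simp [hY] at this ⊢
      linarith
    refine ⟨(Ω 0 0 + Ω 1 1 + s * Ω 0 1) / 2, (Ω 0 0 + Ω 1 1 - s * Ω 0 1) / 2, ?_, ?_, ?_⟩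
    · have him : ((Ω 0 0 + Ω 1 1 + (s:ℂ) * Ω 0 1) / 2).im
          = (Y 0 0 + Y 1 1 + s * Y 0 1) / 2 := by
        simp [hY, Complex.div_im, Complex.add_im, Complex.mul_im]
      rw [him, hrelim]
      have hb := hY11
      set b := Y 0 1
      set c := Y 1 1
      have hq : 0 < c*c + b*c - b*b := by
        have := hdet
        rw [hrelim] at this
        nlinarith
      nlinarith [sq_nonneg (b + c), sq_nonneg ((1+s)*b + 2*c), hs2, hs0,
        mul_pos hY11 hq]
    · have him : ((Ω 0 0 + Ω 1 1 - (s:ℂ) * Ω 0 1) / 2).im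
          = (Y 0 0 + Y 1 1 - s * Y 0 1) / 2 := by
        simp [hY, Complex.div_im, Complex.sub_im, Complex.mul_im]
      rw [him, hrelim]
      set b := Y 0 1
      set c := Y 1 1
      have hq : 0 < c*c + b*c - b*b := by
        have := hdet
        rw [hrelim] at this
        nlinarith
      nlinarith [sq_nonneg ((1-s)*b + 2*c), hs2, hs0, mul_pos hY11 hq]
    · have hrel' : Ω 0 0 = Ω 0 1 + Ω 1 1 := by linear_combination -hrel
      ext i j
      fin_cases i <;> fin_cases j
      · simp [mu5, h10]; field_simp; linear_combination (-2*(Real.sqrt 5:ℂ))*hrel'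
      · simp [mu5, h10]; field_simp; linear_combination (0:ℂ)*h5C
      · simp [mu5, h10]; field_simp; linear_combination (0:ℂ)*h5C
      · simp [mu5, h10]; field_simp; linear_combination (2*(Real.sqrt 5:ℂ))*hrel'

end
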